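/- Let K ⊆ E be a regular closed convex cone and L ⊆ E a linear subspace. For v ∈ K\{0} define λ_v(x) := sup{t : x − tv ∈ K}. Then the sigma measure σ(L) := min_{v ∈ K, ‖v‖=1} max_{x ∈ L, ‖x‖ ≤ 1} λ_v(x) satisfies σ(L) = min{‖u−y‖* : v ∈ K, y ∈ L^⊥, u ∈ K*, ‖v‖ = 1, ⟨u,v⟩ = 1}. -/

import Mathlib

open RealInnerProductSpace

/-- A (possibly non-Euclidean) norm, given as a function. -/
def IsNorm {E : Type*} [NormedAddCommGroup E] [InnerProductSpace ℝ E] (N : E → ℝ) : Prop :=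
  (∀ x, 0 ≤ N x) ∧ (∀ x, N x = 0 ↔ x = 0) ∧
    (∀ (c : ℝ) (x : E), N (c • x) = |c| * N x) ∧ (∀ x y, N (x + y) ≤ N x + N y)

/-- The dual norm `‖u‖* = max_{N x = 1} ⟪u,x⟫`. -/
noncomputable def dualNorm {E : Type*} [NormedAddCommGroup E] [InnerProductSpace ℝ E]
    (N : E → ℝ) (u : E) : ℝ :=
  sSup {r | ∃ x, N x = 1 ∧ r = ⟪u, x⟫}

/-- The dual cone `K* = {u : ⟪u,x⟫ ≥ 0 for all x ∈ K}`. -/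
def dualCone {E : Type*} [NormedAddCommGroup E] [InnerProductSpace ℝ E] (K : Set E) :
    Set E := {u | ∀ x ∈ K, 0 ≤ ⟪u, x⟫}

/-- `λᵥ(x) = sup {t : x − tv ∈ K}`. -/
noncomputable def lambdaDir {E : Type*} [NormedAddCommGroup E] [InnerProductSpace ℝ E]
    (K : Set E) (v : E) (x : E) : ℝ :=
  sSup {t | x - t • v ∈ K}

/-- The sigma measure `σ(L) = min_{v ∈ K, ‖v‖=1} max_{x ∈ L, ‖x‖≤1} λᵥ(x)`. -/
noncomputable def sigmaMeasure {E : Type*} [NormedAddCommGroup E] [InnerProductSpace ℝ E]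
    (N : E → ℝ) (K : Set E) (L : Submodule ℝ E) : ℝ :=
  sInf {r | ∃ v ∈ K, N v = 1 ∧ r = sSup {t | ∃ x ∈ L, N x ≤ 1 ∧ t = lambdaDir K v x}}

namespace SigmaAux

variable {E : Type*} [NormedAddCommGroup E] [InnerProductSpace ℝ E] {N : E → ℝ}

lemma N_zero (hN : IsNorm N) : N 0 = 0 := (hN.2.1 0).2 rfl

lemma N_neg (hN : IsNorm N) (x : E) : N (-x) = N x := by
  have := hN.2.2.1 (-1) x
  simpa using this

lemma N_pos (hN : IsNorm N) {x : E} (hx : x ≠ 0) : 0 < N x :=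
  lt_of_le_of_ne (hN.1 x) (fun h => hx ((hN.2.1 x).1 h.symm))

lemma N_sum (hN : IsNorm N) {ι : Type*} (s : Finset ι) (f : ι → E) :
    N (∑ i ∈ s, f i) ≤ ∑ i ∈ s, N (f i) :=
  Finset.le_sum_of_subadditive N (N_zero hN).le hN.2.2.2 s f

variable [FiniteDimensional ℝ E]

lemma exists_upper (hN : IsNorm N) : ∃ C > (0:ℝ), ∀ x, N x ≤ C * ‖x‖ := by
  set b := stdOrthonormalBasis ℝ E
  have hsum : (0:ℝ) ≤ ∑ i, N (b i) :=
    Finset.sum_nonneg (fun i _ => hN.1 (b i))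
  refine ⟨(∑ i, N (b i)) + 1, by linarith, fun x => ?_⟩
  calc N x = N (∑ i, ⟪b i, x⟫ • b i) := by rw [b.sum_repr']
    _ ≤ ∑ i, N (⟪b i, x⟫ • b i) := N_sum hN _ _
    _ = ∑ i, |⟪b i, x⟫| * N (b i) := by simp [hN.2.2.1]
    _ ≤ ∑ i, ‖x‖ * N (b i) := by
        refine Finset.sum_le_sum fun i _ => ?_
        refine mul_le_mul_of_nonneg_right ?_ (hN.1 _)
        calc |⟪b i, x⟫| ≤ ‖b i‖ * ‖x‖ := abs_real_inner_le_norm _ _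
          _ = ‖x‖ := by simp [b.orthonormal.1 i]
    _ = (∑ i, N (b i)) * ‖x‖ := by rw [Finset.sum_mul]; simp [mul_comm]
    _ ≤ ((∑ i, N (b i)) + 1) * ‖x‖ := by
        have : (0:ℝ) ≤ ‖x‖ := norm_nonneg x
        nlinarith

lemma continuousN (hN : IsNorm N) : Continuous N := by
  obtain ⟨C, hC, hCb⟩ := exists_upper hN
  rw [Metric.continuous_iff]
  intro x ε hε
  refine ⟨ε / C, by positivity, fun y hy => ?_⟩
  have h1 : N y ≤ N x + N (y - x) := by
    have := hN.2.2.2 x (y - x); simpa using this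
  have h2 : N x ≤ N y + N (x - y) := by
    have := hN.2.2.2 y (x - y); simpa using this
  have h3 : N (y - x) ≤ C * ‖y - x‖ := hCb _
  have h4 : N (x - y) ≤ C * ‖x - y‖ := hCb _
  have h5 : ‖y - x‖ = dist y x := by rw [dist_eq_norm]
  have h6 : ‖x - y‖ = dist y x := by rw [dist_comm, dist_eq_norm]
  have hy' : dist y x * C < ε := (lt_div_iff₀ hC).1 hy
  have hd : (0:ℝ) ≤ dist y x := dist_nonneg
  rw [Real.dist_eq, abs_sub_lt_iff]
  constructor <;> nlinarith

lemma exists_lower (hN : IsNorm N) : ∃ c > (0:ℝ), ∀ x, c * ‖x‖ ≤ N x := by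
  rcases subsingleton_or_nontrivial E with hE | hE
  · exact ⟨1, one_pos, fun x => by
      rw [Subsingleton.elim x 0]; simp [N_zero hN]⟩
  · have hsph : (Metric.sphere (0:E) 1).Nonempty :=
      NormedSpace.sphere_nonempty.2 zero_le_one
    obtain ⟨x₀, hx₀s, hx₀min⟩ :=
      (isCompact_sphere (0:E) 1).exists_isMinOn hsph (continuousN hN).continuousOn
    have hx₀ : ‖x₀‖ = 1 := by simpa using hx₀s
    have hx₀ne : x₀ ≠ 0 := by intro h; rw [h] at hx₀; simp at hx₀
    refine ⟨N x₀, N_pos hN hx₀ne, fun x => ?_⟩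
    rcases eq_or_ne x 0 with rfl | hx
    · simp [N_zero hN]
    · have hxs : ‖x‖⁻¹ • x ∈ Metric.sphere (0:E) 1 := by
        simp [norm_smul, norm_ne_zero_iff.2 hx]
      have := hx₀min hxs
      simp only [Set.mem_setOf_eq] at this
      have hns : N (‖x‖⁻¹ • x) = ‖x‖⁻¹ * N x := by
        rw [hN.2.2.1]; congr 1
        rw [abs_of_nonneg (by positivity)]
      rw [hns] at this
      have hxpos : (0:ℝ) < ‖x‖ := norm_pos_iff.2 hx
      calc N x₀ * ‖x‖ ≤ (‖x‖⁻¹ * N x) * ‖x‖ := by nlinarith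
        _ = N x := by field_simp

end SigmaAux


namespace SigmaAux

variable {E : Type*} [NormedAddCommGroup E] [InnerProductSpace ℝ E]
  {N : E → ℝ} {K : Set E}

section Cone

variable (hKcone : ∀ ⦃c : ℝ⦄, 0 ≤ c → ∀ ⦃x⦄, x ∈ K → c • x ∈ K)

include hKcone

lemma zero_mem_K (hne : K.Nonempty) : (0:E) ∈ K := by
  obtain ⟨x, hx⟩ := hne
  simpa using hKcone le_rfl hx

lemma add_mem_K (hKconv : Convex ℝ K) {x y : E} (hx : x ∈ K) (hy : y ∈ K) :
    x + y ∈ K := by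
  have hmid : (1/2 : ℝ) • x + (1/2 : ℝ) • y ∈ K :=
    hKconv hx hy (by norm_num) (by norm_num) (by norm_num)
  have := hKcone (by norm_num : (0:ℝ) ≤ 2) hmid
  rwa [smul_add, smul_smul, smul_smul, show (2:ℝ) * (1/2) = 1 by norm_num, one_smul,
    one_smul] at this

lemma neg_smul_mem (hKclosed : IsClosed K)
    (hKpointed : ∀ x ∈ K, -x ∈ K → x = 0) {v : E} (hv : v ∈ K) (hvne : v ≠ 0)
    {t : ℝ} (ht : (-t) • v ∈ K) : t ≤ 0 := by
  by_contra h
  push_neg at h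
  have h1 : t⁻¹ • ((-t) • v) ∈ K := hKcone (by positivity) ht
  rw [smul_smul] at h1
  have : t⁻¹ * (-t) = -1 := by field_simp
  rw [this] at h1
  simp only [neg_smul, one_smul] at h1
  exact hvne (hKpointed v hv h1)

lemma exists_dual_unit [FiniteDimensional ℝ E] (hKclosed : IsClosed K)
    (hKconv : Convex ℝ K) (hKpointed : ∀ x ∈ K, -x ∈ K → x = 0)
    (hne : K.Nonempty) {v : E} (hv : v ∈ K) (hvne : v ≠ 0) :
    ∃ u, u ∈ dualCone K ∧ ⟪u, v⟫ = 1 := by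
  have hnv : -v ∉ K := fun h => hvne (hKpointed v hv h)
  let Kc : ProperCone ℝ E :=
    { carrier := K
      add_mem' := fun hx hy => add_mem_K hKcone hKconv hx hy
      zero_mem' := zero_mem_K hKcone hne
      smul_mem' := fun c x hx => hKcone c.2 hx
      isClosed' := hKclosed }
  obtain ⟨y, hy1, hy2⟩ :=
    Kc.hyperplane_separation' (x₀ := -v) hnv
  rw [inner_neg_left, real_inner_comm] at hy2
  have hyv : 0 < ⟪y, v⟫ := by linarith
  refine ⟨(⟪y, v⟫)⁻¹ • y, fun x hx => ?_, ?_⟩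
  · rw [real_inner_smul_left]
    have := hy1 x hx
    rw [real_inner_comm] at this
    positivity
  · rw [real_inner_smul_left]
    field_simp

end Cone

section Lambda

lemma lambda_le {u v : E} (hu : u ∈ dualCone K) (huv : ⟪u, v⟫ = 1) (x : E) {t : ℝ}
    (ht : x - t • v ∈ K) : t ≤ ⟪u, x⟫ := by
  have := hu _ ht
  rw [inner_sub_right, real_inner_smul_right, huv, mul_one] at this
  linarith

lemma lambda_bddAbove {u v : E} (hu : u ∈ dualCone K) (huv : ⟪u, v⟫ = 1) (x : E) :
    BddAbove {t : ℝ | x - t • v ∈ K} :=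
  ⟨⟪u, x⟫, fun _ ht => lambda_le hu huv x ht⟩

lemma lambdaDir_le_max {u v : E} (hu : u ∈ dualCone K) (huv : ⟪u, v⟫ = 1) (x : E) :
    lambdaDir K v x ≤ max 0 ⟪u, x⟫ := by
  rcases Set.eq_empty_or_nonempty {t : ℝ | x - t • v ∈ K} with h | h
  · rw [lambdaDir, h, Real.sSup_empty]; exact le_max_left _ _
  · exact csSup_le h fun t ht => le_max_of_le_right (lambda_le hu huv x ht)

lemma lambdaDir_zero (hKcone : ∀ ⦃c : ℝ⦄, 0 ≤ c → ∀ ⦃x⦄, x ∈ K → c • x ∈ K)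
    (hKclosed : IsClosed K) (hKpointed : ∀ x ∈ K, -x ∈ K → x = 0)
    {v : E} (hv : v ∈ K) (hvne : v ≠ 0) : lambdaDir K v (0:E) = 0 := by
  have hset : {t : ℝ | (0:E) - t • v ∈ K} = Set.Iic 0 := by
    ext t
    simp only [Set.mem_setOf_eq, zero_sub, Set.mem_Iic, ← neg_smul]
    constructor
    · exact fun h => neg_smul_mem hKcone hKclosed hKpointed hv hvne h
    · exact fun h => hKcone (by linarith) hv
  rw [lambdaDir, hset, csSup_Iic]

end Lambda

section DualNorm

variable [FiniteDimensional ℝ E]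

lemma exists_N_eq_one [Nontrivial E] (hN : IsNorm N) : ∃ x : E, N x = 1 := by
  obtain ⟨e, he⟩ := exists_ne (0:E)
  refine ⟨(N e)⁻¹ • e, ?_⟩
  rw [hN.2.2.1, abs_of_nonneg (inv_nonneg.2 (hN.1 e)), inv_mul_cancel₀ (N_pos hN he).ne']

lemma dualNorm_set_bddAbove (hN : IsNorm N) (w : E) :
    BddAbove {r | ∃ x, N x = 1 ∧ r = ⟪w, x⟫} := by
  obtain ⟨c, hc, hcb⟩ := exists_lower hN
  refine ⟨‖w‖ * c⁻¹, ?_⟩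
  rintro r ⟨x, hx, rfl⟩
  have h1 : ⟪w, x⟫ ≤ ‖w‖ * ‖x‖ := real_inner_le_norm w x
  have h2 : c * ‖x‖ ≤ 1 := by rw [← hx]; exact hcb x
  have h3 : ‖x‖ ≤ c⁻¹ := by
    have h4 : c * ‖x‖ ≤ c * c⁻¹ := by rw [mul_inv_cancel₀ hc.ne']; exact h2
    exact le_of_mul_le_mul_left h4 hc
  nlinarith [norm_nonneg w]

lemma dualNorm_nonneg [Nontrivial E] (hN : IsNorm N) (w : E) : 0 ≤ dualNorm N w := by
  obtain ⟨x, hx⟩ := exists_N_eq_one hN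
  have h1 : ⟪w, x⟫ ∈ {r | ∃ x, N x = 1 ∧ r = ⟪w, x⟫} := ⟨x, hx, rfl⟩
  have h2 : ⟪w, -x⟫ ∈ {r | ∃ x, N x = 1 ∧ r = ⟪w, x⟫} :=
    ⟨-x, by rw [N_neg hN, hx], rfl⟩
  have hb := dualNorm_set_bddAbove hN w
  rcases le_or_gt 0 ⟪w, x⟫ with h | h
  · exact h.trans (le_csSup hb h1)
  · refine le_trans ?_ (le_csSup hb h2)
    rw [inner_neg_right]; linarith

lemma inner_le_dualNorm [Nontrivial E] (hN : IsNorm N) (w x : E) :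
    ⟪w, x⟫ ≤ dualNorm N w * N x := by
  rcases eq_or_ne x 0 with rfl | hx
  · simp [N_zero hN]
  · have hNx : 0 < N x := N_pos hN hx
    have hmem : ⟪w, (N x)⁻¹ • x⟫ ∈ {r | ∃ x, N x = 1 ∧ r = ⟪w, x⟫} :=
      ⟨(N x)⁻¹ • x, by rw [hN.2.2.1, abs_of_nonneg (by positivity),
        inv_mul_cancel₀ hNx.ne'], rfl⟩
    have := le_csSup (dualNorm_set_bddAbove hN w) hmem
    rw [real_inner_smul_right] at this
    calc ⟪w, x⟫ = (N x) * ((N x)⁻¹ * ⟪w, x⟫) := by field_simp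
      _ ≤ (N x) * dualNorm N w := mul_le_mul_of_nonneg_left this hNx.le
      _ = dualNorm N w * N x := mul_comm _ _

lemma dualNorm_le [Nontrivial E] (hN : IsNorm N) {w : E} {s : ℝ}
    (h : ∀ x, ⟪w, x⟫ ≤ s * N x) : dualNorm N w ≤ s := by
  obtain ⟨x₀, hx₀⟩ := exists_N_eq_one hN
  refine csSup_le ⟨⟪w, x₀⟫, x₀, hx₀, rfl⟩ ?_
  rintro r ⟨x, hx, rfl⟩
  have := h x
  rwa [hx, mul_one] at this

end DualNorm

end SigmaAux

namespace SigmaAux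

variable {E : Type*} [NormedAddCommGroup E] [InnerProductSpace ℝ E]
  {N : E → ℝ} {K : Set E}

theorem exists_dual_pair [FiniteDimensional ℝ E] [Nontrivial E] (hN : IsNorm N)
    (hKclosed : IsClosed K) (hKconv : Convex ℝ K)
    (hKcone : ∀ ⦃c : ℝ⦄, 0 ≤ c → ∀ ⦃x⦄, x ∈ K → c • x ∈ K)
    (hKint : (interior K).Nonempty) (hKpointed : ∀ x ∈ K, -x ∈ K → x = 0)
    (L : Submodule ℝ E) (hL : (↑L ∩ interior K).Nonempty)
    {v : E} (hv : v ∈ K) (hNv : N v = 1) :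
    ∃ u y, y ∈ Lᗮ ∧ u ∈ dualCone K ∧ ⟪u, v⟫ = 1 ∧
      dualNorm N (u - y) ≤ sSup {t | ∃ x ∈ L, N x ≤ 1 ∧ t = lambdaDir K v x} := by
  have hvne : v ≠ 0 := by
    intro h; rw [h, N_zero hN] at hNv; norm_num at hNv
  have hKne : K.Nonempty := ⟨v, hv⟩
  obtain ⟨u₀, hu₀, hu₀v⟩ :=
    exists_dual_unit hKcone hKclosed hKconv hKpointed hKne hv hvne
  obtain ⟨c, hc, hcb⟩ := exists_lower hN
  set T : Set ℝ := {t | ∃ x ∈ L, N x ≤ 1 ∧ t = lambdaDir K v x} with hT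
  have hT0 : (0:ℝ) ∈ T :=
    ⟨0, L.zero_mem, by simp [N_zero hN],
      (lambdaDir_zero hKcone hKclosed hKpointed hv hvne).symm⟩
  have hTbdd : BddAbove T := by
    refine ⟨max 0 (‖u₀‖ * c⁻¹), ?_⟩
    rintro t ⟨x, hxL, hxN, rfl⟩
    refine (lambdaDir_le_max hu₀ hu₀v x).trans (max_le_max le_rfl ?_)
    have h1 : ⟪u₀, x⟫ ≤ ‖u₀‖ * ‖x‖ := real_inner_le_norm u₀ x
    have h2 : c * ‖x‖ ≤ 1 := (hcb x).trans hxN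
    have h3 : ‖x‖ ≤ c⁻¹ := by
      have h4 : c * ‖x‖ ≤ c * c⁻¹ := by rw [mul_inv_cancel₀ hc.ne']; exact h2
      exact le_of_mul_le_mul_left h4 hc
    nlinarith [norm_nonneg u₀]
  set s := sSup T with hs
  have hs0 : 0 ≤ s := le_csSup hTbdd hT0
  -- the bad convex set
  set A : Set E := {p | ∃ x t, x ∈ L ∧ N x ≤ 1 ∧ s < t ∧ p = x - t • v} with hA
  have hAconv : Convex ℝ A := by
    rintro p ⟨x₁, t₁, hx₁L, hx₁N, ht₁, rfl⟩ q ⟨x₂, t₂, hx₂L, hx₂N, ht₂, rfl⟩ a b ha hb hab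
    refine ⟨a • x₁ + b • x₂, a * t₁ + b * t₂,
      L.add_mem (L.smul_mem a hx₁L) (L.smul_mem b hx₂L), ?_, ?_, ?_⟩
    · calc N (a • x₁ + b • x₂) ≤ N (a • x₁) + N (b • x₂) := hN.2.2.2 _ _
        _ = |a| * N x₁ + |b| * N x₂ := by rw [hN.2.2.1, hN.2.2.1]
        _ = a * N x₁ + b * N x₂ := by rw [abs_of_nonneg ha, abs_of_nonneg hb]
        _ ≤ a * 1 + b * 1 := by
            gcongr <;> first | exact hN.1 _ | assumption
        _ = 1 := by rw [mul_one, mul_one, hab]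
    · rcases ha.eq_or_lt with rfl | ha'
      · simp only [zero_mul, zero_add]
        have hb1 : b = 1 := by linarith
        rw [hb1, one_mul]; exact ht₂
      · nlinarith [mul_nonneg hb (le_of_lt (lt_of_le_of_lt hs0 ht₂))]
    · rw [smul_sub, smul_sub, smul_smul, smul_smul, add_smul]
      abel
  have hdisj : Disjoint (interior K) A := by
    rw [Set.disjoint_left]
    rintro p hpi ⟨x, t, hxL, hxN, hst, rfl⟩
    have hpK : x - t • v ∈ K := interior_subset hpi
    have h1 : t ≤ lambdaDir K v x :=
      le_csSup (lambda_bddAbove hu₀ hu₀v x) hpK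
    have h2 : lambdaDir K v x ≤ s :=
      le_csSup hTbdd ⟨x, hxL, hxN, rfl⟩
    linarith
  obtain ⟨f, α, hf1, hf2⟩ :=
    geometric_hahn_banach_open hKconv.interior isOpen_interior hAconv hdisj
  obtain ⟨x₁, hx₁⟩ := hKint
  -- f ≤ α on all of K
  have hKle : ∀ k ∈ K, f k ≤ α := by
    intro k hk
    by_contra hgt
    push_neg at hgt
    have hfx₁ : f x₁ < α := hf1 x₁ hx₁
    have hden : 0 < f k - f x₁ := by linarith
    set t := min 1 ((f k - α) / (f k - f x₁)) with htdef
    have ht0 : 0 < t := lt_min one_pos (div_pos (by linarith) hden)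
    have ht1 : t ≤ 1 := min_le_left _ _
    have htq : t ≤ (f k - α) / (f k - f x₁) := min_le_right _ _
    have htmul : t * (f k - f x₁) ≤ f k - α := by
      rw [le_div_iff₀ hden] at htq; exact htq
    have hmem : (1 - t) • k + t • x₁ ∈ interior K :=
      hKconv.combo_self_interior_mem_interior hk hx₁ (by linarith) ht0 (by ring)
    have := hf1 _ hmem
    simp only [map_add, map_smul, smul_eq_mul] at this
    nlinarith
  -- α ≥ 0 and f ≤ 0 on K
  have hα0 : 0 ≤ α := by
    have := hKle 0 (zero_mem_K hKcone hKne)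
    simpa using this
  have hKle0 : ∀ k ∈ K, f k ≤ 0 := by
    intro k hk
    by_contra hgt
    push_neg at hgt
    have hck : ((α + 1) / f k) • k ∈ K := hKcone (by positivity) hk
    have := hKle _ hck
    rw [map_smul, smul_eq_mul, div_mul_cancel₀ _ hgt.ne'] at this
    linarith
  -- f v < 0
  have hAmem : ∀ x ∈ L, N x ≤ 1 → ∀ t, s < t → α ≤ f x - t * f v := by
    intro x hxL hxN t hst
    have := hf2 _ ⟨x, t, hxL, hxN, hst, rfl⟩
    simpa [map_sub, map_smul, smul_eq_mul] using this
  have hfv : f v < 0 := by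
    rcases lt_or_ge (f v) 0 with h | h
    · exact h
    have hfv0 : f v ≤ 0 := hKle0 v hv
    have hfveq : f v = 0 := le_antisymm hfv0 h
    -- then f vanishes on L
    have hfL : ∀ x ∈ L, f x = 0 := by
      have key : ∀ x ∈ L, N x ≤ 1 → α ≤ f x := by
        intro x hxL hxN
        have := hAmem x hxL hxN (s+1) (by linarith)
        rw [hfveq] at this; linarith
      have key2 : ∀ x ∈ L, 0 ≤ f x := by
        intro x hxL
        set r := (N x + 1)⁻¹ with hr
        have hNx : 0 ≤ N x := hN.1 x
        have hrpos : 0 < r := by positivity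
        have hrN : N (r • x) ≤ 1 := by
          rw [hN.2.2.1, abs_of_pos hrpos, hr]
          calc (N x + 1)⁻¹ * N x ≤ (N x + 1)⁻¹ * (N x + 1) := by gcongr; linarith
            _ = 1 := inv_mul_cancel₀ (by positivity)
        have := key _ (L.smul_mem r hxL) hrN
        rw [map_smul, smul_eq_mul] at this
        nlinarith
      intro x hxL
      have h1 := key2 x hxL
      have h2 := key2 (-x) (L.neg_mem hxL)
      rw [map_neg] at h2
      linarith
    obtain ⟨x₂, hx₂L, hx₂int⟩ := hL
    have hfx₂ : f x₂ = 0 := hfL x₂ hx₂L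
    obtain ⟨ρ, hρ, hball⟩ := Metric.isOpen_iff.1 isOpen_interior x₂ hx₂int
    -- f vanishes identically
    have hzero : ∀ w : E, f w = 0 := by
      have haux : ∀ w : E, f w ≤ 0 := by
        intro w
        set δ := ρ / (2 * (‖w‖ + 1)) with hδ
        have hδpos : 0 < δ := by positivity
        have hmem : x₂ + δ • w ∈ K := by
          apply interior_subset
          apply hball
          rw [Metric.mem_ball, dist_eq_norm, add_sub_cancel_left, norm_smul,
            Real.norm_eq_abs, abs_of_pos hδpos, hδ]
          rw [div_mul_eq_mul_div, div_lt_iff₀ (by positivity)]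
          nlinarith [norm_nonneg w]
        have := hKle0 _ hmem
        rw [map_add, map_smul, smul_eq_mul, hfx₂, zero_add] at this
        nlinarith
      intro w
      have h1 := haux w
      have h2 := haux (-w)
      rw [map_neg] at h2
      linarith
    have hp₀ : α ≤ f ((0:E) - (s+1) • v) :=
      hf2 _ ⟨0, s+1, L.zero_mem, by simp [N_zero hN], by linarith, rfl⟩
    rw [hzero] at hp₀
    have := hf1 x₂ hx₂int
    rw [hzero] at this
    linarith
  -- normalized functional
  set c₀ := -(f v) with hc₀
  have hc₀pos : 0 < c₀ := by simp [hc₀]; linarith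
  set φ : E →ₗ[ℝ] ℝ := c₀⁻¹ • (-(f : E →ₗ[ℝ] ℝ)) with hφ
  have hφ_apply : ∀ x, φ x = c₀⁻¹ * (-(f x)) := fun x => rfl
  have hφv : φ v = 1 := by
    rw [hφ_apply, hc₀]; field_simp; exact div_self hfv.ne
  have hφK : ∀ k ∈ K, 0 ≤ φ k := by
    intro k hk
    rw [hφ_apply]
    have := hKle0 k hk
    have h2 : 0 ≤ -(f k) := by linarith
    positivity
  have hφL : ∀ x ∈ L, φ x ≤ s * N x := by
    have hbase : ∀ x ∈ L, N x ≤ 1 → φ x ≤ s := by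
      intro x hxL hxN
      by_contra hgt
      push_neg at hgt
      set t := (φ x + s) / 2 with htdef
      have hst : s < t := by rw [htdef]; linarith
      have := hAmem x hxL hxN t hst
      -- α ≤ f x - t * f v,  f x = -c₀ * φ x, f v = -c₀
      have hfx : f x = -(c₀ * φ x) := by
        rw [hφ_apply]; field_simp
      have hfveq2 : f v = -c₀ := by rw [hc₀]; ring
      rw [hfx, hfveq2] at this
      have htlt : t < φ x := by rw [htdef]; linarith
      nlinarith [mul_pos hc₀pos (sub_pos.2 htlt)]
    intro x hxL
    rcases eq_or_ne x 0 with rfl | hx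
    · simp [N_zero hN]
    · have hNx : 0 < N x := N_pos hN hx
      have := hbase ((N x)⁻¹ • x) (L.smul_mem _ hxL)
        (by rw [hN.2.2.1, abs_of_pos (by positivity), inv_mul_cancel₀ hNx.ne'])
      simp only [map_smul, smul_eq_mul] at this
      have h5 : (N x)⁻¹ * φ x ≤ s := this
      calc φ x = N x * ((N x)⁻¹ * φ x) := by field_simp
        _ ≤ N x * s := mul_le_mul_of_nonneg_left h5 hNx.le
        _ = s * N x := mul_comm _ _
  -- Hahn-Banach extension
  obtain ⟨g, hg1, hg2⟩ := exists_extension_of_le_sublinear (φ.toPMap L)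
    (fun x => s * N x)
    (fun r hr x => by
      show s * N (r • x) = r * (s * N x)
      rw [hN.2.2.1, abs_of_pos hr]; ring)
    (fun x y => by
      show s * N (x + y) ≤ s * N x + s * N y
      nlinarith [hN.2.2.2 x y, hN.1 x, hN.1 y])
    (fun x => by
      change φ x ≤ s * N x
      exact hφL x x.2)
  -- represent by vectors
  set fc : E →L[ℝ] ℝ := c₀⁻¹ • (-f) with hfc
  have hfcφ : ∀ x, fc x = φ x := fun x => rfl
  set u := (InnerProductSpace.toDual ℝ E).symm fc with hu
  have hu_apply : ∀ x, ⟪u, x⟫ = φ x := by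
    intro x
    rw [hu, InnerProductSpace.toDual_symm_apply]
    exact hfcφ x
  set gc := LinearMap.toContinuousLinearMap g with hgc
  set w := (InnerProductSpace.toDual ℝ E).symm gc with hw
  have hw_apply : ∀ x, ⟪w, x⟫ = g x := by
    intro x
    rw [hw, InnerProductSpace.toDual_symm_apply]
    rfl
  refine ⟨u, u - w, ?_, ?_, ?_, ?_⟩
  · rw [Submodule.mem_orthogonal']
    intro x hxL
    rw [inner_sub_left, hu_apply, hw_apply]
    have := hg1 ⟨x, hxL⟩
    change g x = φ x at this
    rw [this]; ring
  · intro x hx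
    rw [hu_apply]
    exact hφK x hx
  · rw [hu_apply]; exact hφv
  · have huw : u - (u - w) = w := by abel
    rw [huw]
    exact dualNorm_le hN (fun x => by rw [hw_apply]; exact hg2 x)

end SigmaAux

namespace SigmaAux

variable {E : Type*} [NormedAddCommGroup E] [InnerProductSpace ℝ E]
  {N : E → ℝ} {K : Set E}

lemma T_zero_mem (hN : IsNorm N)
    (hKcone : ∀ ⦃c : ℝ⦄, 0 ≤ c → ∀ ⦃x⦄, x ∈ K → c • x ∈ K)
    (hKclosed : IsClosed K) (hKpointed : ∀ x ∈ K, -x ∈ K → x = 0)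
    (L : Submodule ℝ E) {v : E} (hv : v ∈ K) (hvne : v ≠ 0) :
    (0:ℝ) ∈ {t | ∃ x ∈ L, N x ≤ 1 ∧ t = lambdaDir K v x} :=
  ⟨0, L.zero_mem, by simp [N_zero hN],
    (lambdaDir_zero hKcone hKclosed hKpointed hv hvne).symm⟩

lemma T_bddAbove [FiniteDimensional ℝ E] (hN : IsNorm N)
    (hKclosed : IsClosed K) (hKconv : Convex ℝ K)
    (hKcone : ∀ ⦃c : ℝ⦄, 0 ≤ c → ∀ ⦃x⦄, x ∈ K → c • x ∈ K)
    (hKpointed : ∀ x ∈ K, -x ∈ K → x = 0)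
    (L : Submodule ℝ E) {v : E} (hv : v ∈ K) (hvne : v ≠ 0) :
    BddAbove {t | ∃ x ∈ L, N x ≤ 1 ∧ t = lambdaDir K v x} := by
  obtain ⟨u₀, hu₀, hu₀v⟩ :=
    exists_dual_unit hKcone hKclosed hKconv hKpointed ⟨v, hv⟩ hv hvne
  obtain ⟨c, hc, hcb⟩ := exists_lower hN
  refine ⟨max 0 (‖u₀‖ * c⁻¹), ?_⟩
  rintro t ⟨x, hxL, hxN, rfl⟩
  refine (lambdaDir_le_max hu₀ hu₀v x).trans (max_le_max le_rfl ?_)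
  have h1 : ⟪u₀, x⟫ ≤ ‖u₀‖ * ‖x‖ := real_inner_le_norm u₀ x
  have h2 : c * ‖x‖ ≤ 1 := (hcb x).trans hxN
  have h3 : ‖x‖ ≤ c⁻¹ := by
    have h4 : c * ‖x‖ ≤ c * c⁻¹ := by rw [mul_inv_cancel₀ hc.ne']; exact h2
    exact le_of_mul_le_mul_left h4 hc
  nlinarith [norm_nonneg u₀]

end SigmaAux


open SigmaAux in
/-- Characterization of the sigma measure:
`σ(L) = min {‖u−y‖* : v ∈ K, y ∈ L^⊥, u ∈ K*, ‖v‖ = 1, ⟪u,v⟫ = 1}`. -/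
theorem sigma_eq_min_dist {E : Type*} [NormedAddCommGroup E]
    [InnerProductSpace ℝ E] [FiniteDimensional ℝ E]
    (N : E → ℝ) (hN : IsNorm N) (K : Set E)
    (hKclosed : IsClosed K) (hKconv : Convex ℝ K)
    (hKcone : ∀ ⦃c : ℝ⦄, 0 ≤ c → ∀ ⦃x⦄, x ∈ K → c • x ∈ K)
    (hKint : (interior K).Nonempty) (hKpointed : ∀ x ∈ K, -x ∈ K → x = 0)
    (L : Submodule ℝ E) (hL : (↑L ∩ interior K).Nonempty) :
    sigmaMeasure N K L =
      sInf {r | ∃ v y u, v ∈ K ∧ y ∈ Lᗮ ∧ u ∈ dualCone K ∧ N v = 1 ∧ ⟪u, v⟫ = 1 ∧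
        r = dualNorm N (u - y)} := by
  rcases subsingleton_or_nontrivial E with hE | hE
  · have hno : ∀ v : E, N v ≠ 1 := by
      intro v h
      rw [Subsingleton.elim v 0, N_zero hN] at h
      norm_num at h
    have e1 : {r | ∃ v ∈ K, N v = 1 ∧
        r = sSup {t | ∃ x ∈ L, N x ≤ 1 ∧ t = lambdaDir K v x}} = (∅ : Set ℝ) := by
      ext r
      simp only [Set.mem_setOf_eq, Set.mem_empty_iff_false, iff_false, not_exists]
      rintro v ⟨-, hv1, -⟩
      exact hno v hv1
    have e2 : {r | ∃ v y u, v ∈ K ∧ y ∈ Lᗮ ∧ u ∈ dualCone K ∧ N v = 1 ∧ ⟪u, v⟫ = 1 ∧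
        r = dualNorm N (u - y)} = (∅ : Set ℝ) := by
      ext r
      simp only [Set.mem_setOf_eq, Set.mem_empty_iff_false, iff_false, not_exists]
      rintro v y u ⟨-, -, -, hv1, -⟩
      exact hno v hv1
    rw [sigmaMeasure, e1, e2]
  · -- nontrivial case
    have hKne : K.Nonempty := by
      obtain ⟨x₂, -, hx₂⟩ := hL
      exact ⟨x₂, interior_subset hx₂⟩
    -- a nonzero element of K
    obtain ⟨z, hzK, hzne⟩ : ∃ z ∈ K, z ≠ 0 := by
      obtain ⟨xb, hxb⟩ := hKint
      obtain ⟨ρ, hρ, hball⟩ := Metric.isOpen_iff.1 isOpen_interior xb hxb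
      obtain ⟨e₀, he₀⟩ := exists_ne (0:E)
      set w := (ρ / (2 * ‖e₀‖)) • e₀ with hw
      have hwne : w ≠ 0 := by
        rw [hw]
        apply smul_ne_zero _ he₀
        have : 0 < ‖e₀‖ := norm_pos_iff.2 he₀
        positivity
      have hwnorm : ‖w‖ < ρ := by
        rw [hw, norm_smul, Real.norm_eq_abs]
        have h0 : 0 < ‖e₀‖ := norm_pos_iff.2 he₀
        rw [abs_of_pos (by positivity)]
        rw [div_mul_eq_mul_div, div_lt_iff₀ (by positivity)]
        nlinarith
      have h1 : xb + w ∈ K := interior_subset (hball (by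
        rw [Metric.mem_ball, dist_eq_norm, add_sub_cancel_left]; exact hwnorm))
      have h2 : xb - w ∈ K := interior_subset (hball (by
        rw [Metric.mem_ball, dist_eq_norm]
        simpa using hwnorm))
      rcases eq_or_ne (xb + w) 0 with h | h
      · refine ⟨xb - w, h2, ?_⟩
        intro h'
        apply hwne
        have e : xb = w := sub_eq_zero.1 h'
        rw [e] at h
        have h2 : (2:ℝ) • w = 0 := by rw [two_smul]; exact h
        rcases smul_eq_zero.1 h2 with h3 | h3
        · norm_num at h3
        · exact h3
      · exact ⟨xb + w, h1, h⟩
    have hNz : 0 < N z := N_pos hN hzne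
    set v₀ := (N z)⁻¹ • z with hv₀
    have hv₀K : v₀ ∈ K := hKcone (by positivity) hzK
    have hNv₀ : N v₀ = 1 := by
      rw [hv₀, hN.2.2.1, abs_of_pos (by positivity), inv_mul_cancel₀ hNz.ne']
    have hv₀ne : v₀ ≠ 0 := by
      intro h
      rw [h, N_zero hN] at hNv₀
      norm_num at hNv₀
    obtain ⟨u₀, hu₀, hu₀v₀⟩ :=
      exists_dual_unit hKcone hKclosed hKconv hKpointed hKne hv₀K hv₀ne
    set S₁ : Set ℝ := {r | ∃ v ∈ K, N v = 1 ∧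
      r = sSup {t | ∃ x ∈ L, N x ≤ 1 ∧ t = lambdaDir K v x}} with hS₁def
    set S₂ : Set ℝ := {r | ∃ v y u, v ∈ K ∧ y ∈ Lᗮ ∧ u ∈ dualCone K ∧ N v = 1 ∧
      ⟪u, v⟫ = 1 ∧ r = dualNorm N (u - y)} with hS₂def
    have hS₁ne : S₁.Nonempty := ⟨_, v₀, hv₀K, hNv₀, rfl⟩
    have hS₂ne : S₂.Nonempty :=
      ⟨_, v₀, 0, u₀, hv₀K, Lᗮ.zero_mem, hu₀, hNv₀, hu₀v₀, rfl⟩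
    have hS₁bdd : BddBelow S₁ := by
      refine ⟨0, ?_⟩
      rintro r ⟨v, hvK, hNv, rfl⟩
      have hvne : v ≠ 0 := by
        intro h; rw [h, N_zero hN] at hNv; norm_num at hNv
      exact le_csSup (T_bddAbove hN hKclosed hKconv hKcone hKpointed L hvK hvne)
        (T_zero_mem hN hKcone hKclosed hKpointed L hvK hvne)
    have hS₂bdd : BddBelow S₂ := by
      refine ⟨0, ?_⟩
      rintro r ⟨v, y, u, -, -, -, -, -, rfl⟩
      exact dualNorm_nonneg hN _
    show sInf S₁ = sInf S₂
    apply le_antisymm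
    · refine le_csInf hS₂ne ?_
      rintro r ⟨v, y, u, hvK, hyL, hu, hNv, huv, rfl⟩
      have hvne : v ≠ 0 := by
        intro h; rw [h, N_zero hN] at hNv; norm_num at hNv
      have step1 : sInf S₁ ≤ sSup {t | ∃ x ∈ L, N x ≤ 1 ∧ t = lambdaDir K v x} :=
        csInf_le hS₁bdd ⟨v, hvK, hNv, rfl⟩
      refine step1.trans (csSup_le
        ⟨0, T_zero_mem hN hKcone hKclosed hKpointed L hvK hvne⟩ ?_)
      rintro t ⟨x, hxL, hxN, rfl⟩
      have hyx : ⟪y, x⟫ = 0 := (Submodule.mem_orthogonal' L y).1 hyL x hxL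
      rcases Set.eq_empty_or_nonempty {t' : ℝ | x - t' • v ∈ K} with h | h
      · rw [lambdaDir, h, Real.sSup_empty]
        exact dualNorm_nonneg hN _
      · refine csSup_le h fun t' ht' => ?_
        have h1 : t' ≤ ⟪u, x⟫ := lambda_le hu huv x ht'
        have h2 : ⟪u - y, x⟫ = ⟪u, x⟫ := by
          rw [inner_sub_left, hyx, sub_zero]
        have h3 : ⟪u - y, x⟫ ≤ dualNorm N (u - y) * N x :=
          inner_le_dualNorm hN _ _
        have h4 : 0 ≤ dualNorm N (u - y) := dualNorm_nonneg hN _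
        nlinarith
    · refine le_csInf hS₁ne ?_
      rintro r ⟨v, hvK, hNv, rfl⟩
      obtain ⟨u, y, hyL, hu, huv, hle⟩ :=
        exists_dual_pair hN hKclosed hKconv hKcone hKint hKpointed L hL hvK hNv
      exact (csInf_le hS₂bdd ⟨v, y, u, hvK, hyL, hu, hNv, huv, rfl⟩).trans hle
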